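/- Suppose 0 ≤ h < a, Γ is an (n,h) subset of an open set Ω ⊆ ℝ^(n+1), r > 0, x₀ ∈ ℝⁿ, ψ : ℝⁿ → ℝ is continuous, C² on the annulus {x : r/16 < |x-x₀| < r}, and satisfies: (i) the trace of the second fundamental form of Σ(ψ) against the upward unit normal is < -h(1+|∇ψ|²)^(1/2) at every point over the annulus, (ii) there exists t with 0 < t ≤ M such that ψ + t touches Γ̄ from above, and (iii) Σ(ψ+t) ∩ Γ ⊆ 𝒞_r(x₀). Then the touching set satisfies Σ(ψ+t) ∩ Γ ∩ (𝒞_r(x₀) ∖ closure(𝒞_{r/16}(x₀))) = ∅; i.e., all touching points lie over the closed ball B^n(x₀, r/16). -/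

import Mathlib

open MeasureTheory Metric Set Filter
open scoped RealInnerProductSpace ENNReal NNReal Topology

noncomputable section
set_option maxHeartbeats 2000000

/-- `n`-dimensional Euclidean space. -/
abbrev Eu (n : ℕ) := EuclideanSpace ℝ (Fin n)

/-- Append a last coordinate: `(x, t) ∈ ℝⁿ × ℝ ≅ ℝ^(n+1)`. -/
def snoc' {n : ℕ} (x : Eu n) (t : ℝ) : Eu (n+1) :=
  WithLp.toLp 2 (Fin.snoc (α := fun _ => ℝ) (fun i => x i) t)

/-- The first `n` coordinates `z'` of `z ∈ ℝ^(n+1)`. -/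
def tail' {n : ℕ} (z : Eu (n+1)) : Eu n := WithLp.toLp 2 (fun i : Fin n => z i.castSucc)

/-- The last coordinate `z_{n+1}` of `z ∈ ℝ^(n+1)`. -/
def lastc {n : ℕ} (z : Eu (n+1)) : ℝ := z (Fin.last n)

/-- The graph `Σ(f)` of `f : ℝⁿ → ℝ`. -/
def graphOf {n : ℕ} (f : Eu n → ℝ) : Set (Eu (n+1)) := {z | lastc z = f (tail' z)}

/-- The open supergraph `Σ⁺(f)`. -/
def supergraphOf {n : ℕ} (f : Eu n → ℝ) : Set (Eu (n+1)) := {z | f (tail' z) < lastc z}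

/-- The paraboloid of opening `a`, center `x` and height `t`. -/
def par {n : ℕ} (a : ℝ) (x : Eu n) (t : ℝ) : Eu n → ℝ := fun y => a/2 * ‖y - x‖^2 + t

/-- The upward unit normal `(-g,1)/√(1+|g|²)` associated to the gradient `g`. -/
def upNormal {n : ℕ} (g : Eu n) : Eu (n+1) := (Real.sqrt (1+‖g‖^2))⁻¹ • snoc' (-g) 1

/-- `f` touches the closed set `K` from above. -/
def TouchesFromAbove {n : ℕ} (f : Eu n → ℝ) (K : Set (Eu (n+1))) : Prop :=
  (graphOf f ∩ K).Nonempty ∧ supergraphOf f ∩ K = ∅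

/-- The touching set `A_a(Γ; C)`: pairs `(z, η)` where `z` is a touching point of the
paraboloid `P_{a,x}` (opening `a`, center `x ∈ C`) with `Γ̄`, and `η` is the upward unit
normal to `Σ(P_{a,x})` at `z`. -/
def ASet {n : ℕ} (a : ℝ) (Γ : Set (Eu (n+1))) (C : Set (Eu n)) :
    Set (Eu (n+1) × Eu (n+1)) :=
  {p | ∃ x ∈ C, ∃ t : ℝ, TouchesFromAbove (par a x t) (closure Γ) ∧
    p.1 ∈ graphOf (par a x t) ∩ closure Γ ∧
    p.2 = upNormal (a • (tail' p.1 - x))}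

/-- The horizontal projection `A'_a(Γ; C)`. -/
def ASet' {n : ℕ} (a : ℝ) (Γ : Set (Eu (n+1))) (C : Set (Eu n)) : Set (Eu n) :=
  (fun p => tail' p.1) '' ASet a Γ C

/-- The open cylinder `𝒞₁(0) = U^n(0,1) × ℝ`. -/
def cyl (n : ℕ) : Set (Eu (n+1)) := {z | ‖tail' z‖ < 1}

/-- Sum of the lowest `m` eigenvalues of a symmetric bilinear form (Ky Fan): the infimum
of `∑ B(uᵢ,uᵢ)` over orthonormal families `u : Fin m → E`. -/
def traceLowest (m : ℕ) {E : Type*} [NormedAddCommGroup E] [InnerProductSpace ℝ E]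
    (B : E →L[ℝ] E →L[ℝ] ℝ) : ℝ :=
  sInf {s | ∃ u : Fin m → E, Orthonormal ℝ u ∧ s = ∑ i, B (u i) (u i)}

/-- `Γ` is an `(m,h)` subset of `Ω`: it is relatively closed in `Ω` and for every `x ∈ Γ`
and `C²` function `f` near `x` such that `f|Γ` has a local maximum at `x` and `∇f(x) ≠ 0`,
the sum of the lowest `m` eigenvalues of `Hess f(x)` is at most `h|∇f(x)|`. -/
def IsMH {n : ℕ} (m : ℕ) (h : ℝ) (Ω Γ : Set (Eu (n+1))) : Prop :=
  Γ ⊆ Ω ∧ closure Γ ∩ Ω ⊆ Γ ∧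
  ∀ x ∈ Γ, ∀ f : Eu (n+1) → ℝ, (∃ U ∈ 𝓝 x, ContDiffOn ℝ 2 f U) →
    IsLocalMaxOn f Γ x → gradient f x ≠ 0 →
    traceLowest m (fderiv ℝ (fderiv ℝ f) x) ≤ h * ‖gradient f x‖

/-- Divergence of a vector field on `ℝⁿ`. -/
def divg {n : ℕ} (W : Eu n → Eu n) (x : Eu n) : ℝ :=
  LinearMap.trace ℝ (Eu n) (fderiv ℝ W x : Eu n →ₗ[ℝ] Eu n)

/-- `div(∇ψ/√(1+|∇ψ|²))(x)`, the trace of the second fundamental form of the graph of `ψ`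
over `x` with respect to the upward unit normal. -/
def meanCurvGraph {n : ℕ} (ψ : Eu n → ℝ) (x : Eu n) : ℝ :=
  divg (fun y => (Real.sqrt (1 + ‖gradient ψ y‖^2))⁻¹ • gradient ψ y) x

/-- The `m`-th stratum `Γ^(m)`: points of `Γ` that can be touched from `n+1-m` linearly
independent directions by open balls of `ℝ^(n+1)`. -/
def stratum {n : ℕ} (m : ℕ) (Γ : Set (Eu (n+1))) : Set (Eu (n+1)) :=
  {z ∈ Γ | ∃ v : Fin (n+1-m) → Eu (n+1), LinearIndependent ℝ v ∧
    ∀ i, ‖v i‖ = 1 ∧ ∃ r > (0:ℝ), Metric.ball (z + r • v i) r ∩ Γ = ∅}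

section Aux

open InnerProductSpace

/-- `tail'` as a continuous linear map. -/
def tailCLM (n : ℕ) : Eu (n+1) →L[ℝ] Eu n :=
  LinearMap.toContinuousLinearMap
    { toFun := tail', map_add' := fun _ _ => rfl, map_smul' := fun _ _ => rfl }

@[simp] lemma tailCLM_apply {n : ℕ} (z : Eu (n+1)) : tailCLM n z = tail' z := rfl

/-- `lastc` as a continuous linear map. -/
def lastCLM (n : ℕ) : Eu (n+1) →L[ℝ] ℝ :=
  LinearMap.toContinuousLinearMap
    { toFun := lastc, map_add' := fun _ _ => rfl, map_smul' := fun _ _ => rfl }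

@[simp] lemma lastCLM_apply {n : ℕ} (z : Eu (n+1)) : lastCLM n z = lastc z := rfl

lemma tail_snoc {n : ℕ} (x : Eu n) (t : ℝ) : tail' (snoc' x t) = x := by
  ext i; simp [tail', snoc', Fin.snoc_castSucc]

lemma lastc_snoc {n : ℕ} (x : Eu n) (t : ℝ) : lastc (snoc' x t) = t := by
  simp [lastc, snoc']

lemma norm_sq_eu {n : ℕ} (x : Eu n) : ‖x‖^2 = ∑ i, (x i)^2 := by
  rw [EuclideanSpace.norm_eq, Real.sq_sqrt]
  · simp [Real.norm_eq_abs, sq_abs]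
  · positivity

lemma inner_eu {n : ℕ} (x y : Eu n) : ⟪x, y⟫ = ∑ i, x i * y i := by
  rw [PiLp.inner_apply]; simp [mul_comm]

lemma norm_snoc_sq {n : ℕ} (x : Eu n) (t : ℝ) : ‖snoc' x t‖^2 = ‖x‖^2 + t^2 := by
  rw [norm_sq_eu, norm_sq_eu, Fin.sum_univ_castSucc]
  simp [snoc']

lemma norm_tail_le {n : ℕ} (z : Eu (n+1)) : ‖tail' z‖ ≤ ‖z‖ := by
  have h1 : ‖tail' z‖^2 ≤ ‖z‖^2 := by
    rw [norm_sq_eu, norm_sq_eu, Fin.sum_univ_castSucc]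
    have : (0:ℝ) ≤ z (Fin.last n) ^ 2 := sq_nonneg _
    simp only [tail']
    linarith
  nlinarith [norm_nonneg (tail' z), norm_nonneg z]

lemma inner_snoc {n : ℕ} (x : Eu n) (t : ℝ) (w : Eu (n+1)) :
    ⟪snoc' x t, w⟫ = ⟪x, tail' w⟫ + t * lastc w := by
  rw [inner_eu, inner_eu, Fin.sum_univ_castSucc]
  simp [snoc', tail', lastc]

lemma tail_single_castSucc {n : ℕ} (i : Fin n) :
    tail' (EuclideanSpace.single (Fin.castSucc i) (1:ℝ)) = EuclideanSpace.single i 1 := by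
  ext j
  simp only [tail', PiLp.toLp_apply, EuclideanSpace.single_apply]
  by_cases h : j = i
  · simp [h]
  · rw [if_neg h, if_neg (by simpa [Fin.castSucc_inj] using h)]

lemma tail_single_last {n : ℕ} :
    tail' (EuclideanSpace.single (Fin.last n) (1:ℝ)) = 0 := by
  ext j
  simp only [tail', PiLp.toLp_apply, EuclideanSpace.single_apply]
  rw [if_neg (by exact (Fin.castSucc_lt_last j).ne)]
  rfl

lemma lastc_single_castSucc {n : ℕ} (i : Fin n) :
    lastc (EuclideanSpace.single (Fin.castSucc i) (1:ℝ)) = 0 := by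
  simp only [lastc, EuclideanSpace.single_apply]
  rw [if_neg (by exact (Fin.castSucc_lt_last i).ne')]

lemma lastc_single_last {n : ℕ} :
    lastc (EuclideanSpace.single (Fin.last n) (1:ℝ)) = 1 := by
  simp [lastc, EuclideanSpace.single_apply]

lemma trace_eq_sum {m : ℕ} (M : Eu m →L[ℝ] Eu m) :
    LinearMap.trace ℝ (Eu m) (M : Eu m →ₗ[ℝ] Eu m)
      = ∑ i, (M (EuclideanSpace.single i 1)) i := by
  classical
  rw [LinearMap.trace_eq_matrix_trace ℝ (EuclideanSpace.basisFun (Fin m) ℝ).toBasis]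
  rw [Matrix.trace]
  refine Finset.sum_congr rfl fun i _ => ?_
  rw [Matrix.diag_apply, LinearMap.toMatrix_apply]
  simp [EuclideanSpace.basisFun_apply]

lemma eu_sum_single {m : ℕ} (y : Eu m) : ∑ j, y j • EuclideanSpace.single j (1:ℝ) = y := by
  have := (EuclideanSpace.basisFun (Fin m) ℝ).sum_repr y
  simpa [EuclideanSpace.basisFun_apply, EuclideanSpace.basisFun_repr] using this

lemma sum_bilin_basis {m : ℕ} (B : Eu m →L[ℝ] Eu m →L[ℝ] ℝ)
    (b : OrthonormalBasis (Fin m) ℝ (Eu m)) :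
    ∑ i, B (b i) (b i) = ∑ j, B (EuclideanSpace.single j 1) (EuclideanSpace.single j 1) := by
  classical
  have expand : ∀ y : Eu m, y = ∑ j, y j • EuclideanSpace.single j (1:ℝ) :=
    fun y => (eu_sum_single y).symm
  have hBy : ∀ y y' : Eu m, B y y' = ∑ j, ∑ k, y j * y' k *
      B (EuclideanSpace.single j 1) (EuclideanSpace.single k 1) := by
    intro y y'
    calc B y y' = ∑ k, (B y) (y' k • EuclideanSpace.single k 1) := by
          conv_lhs => rw [expand y']
          rw [map_sum]
      _ = ∑ k, ∑ j, y j * y' k *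
          B (EuclideanSpace.single j 1) (EuclideanSpace.single k 1) := by
          refine Finset.sum_congr rfl fun k _ => ?_
          rw [_root_.map_smul, smul_eq_mul]
          conv_lhs => rw [expand y]
          rw [map_sum, ContinuousLinearMap.sum_apply, Finset.mul_sum]
          refine Finset.sum_congr rfl fun j _ => ?_
          rw [_root_.map_smul, ContinuousLinearMap.smul_apply, smul_eq_mul]
          ring
      _ = ∑ j, ∑ k, y j * y' k *
          B (EuclideanSpace.single j 1) (EuclideanSpace.single k 1) := Finset.sum_comm
  have parseval : ∀ j k : Fin m, ∑ i, (b i j) * (b i k) = if j = k then 1 else 0 := by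
    intro j k
    have h := b.sum_inner_mul_inner (EuclideanSpace.single j (1:ℝ)) (EuclideanSpace.single k (1:ℝ))
    simp only [EuclideanSpace.inner_single_left, EuclideanSpace.inner_single_right,
      RCLike.conj_to_real, one_mul, mul_one, starRingEnd_apply, star_trivial] at h
    rw [h, EuclideanSpace.single_apply]
    simp [eq_comm]
  calc ∑ i, B (b i) (b i)
      = ∑ i, ∑ j, ∑ k, (b i j) * (b i k) *
        B (EuclideanSpace.single j 1) (EuclideanSpace.single k 1) :=
        Finset.sum_congr rfl fun i _ => hBy _ _
    _ = ∑ j, ∑ k, (∑ i, (b i j) * (b i k)) *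
        B (EuclideanSpace.single j 1) (EuclideanSpace.single k 1) := by
        rw [Finset.sum_comm]
        refine Finset.sum_congr rfl fun j _ => ?_
        rw [Finset.sum_comm]
        refine Finset.sum_congr rfl fun k _ => ?_
        rw [Finset.sum_mul]
    _ = ∑ j, B (EuclideanSpace.single j 1) (EuclideanSpace.single j 1) := by
        refine Finset.sum_congr rfl fun j _ => ?_
        rw [Finset.sum_congr rfl fun k (_ : k ∈ Finset.univ) => by rw [parseval j k]]
        simp

lemma extend_orthonormal {m : ℕ} (u : Fin m → Eu (m+1)) (hu : Orthonormal ℝ u) :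
    ∃ b : OrthonormalBasis (Fin (m+1)) ℝ (Eu (m+1)), ∀ i : Fin m, b i.castSucc = u i := by
  classical
  set v : Fin (m+1) → Eu (m+1) := Fin.snoc u 0 with hv
  set s : Set (Fin (m+1)) := Set.range Fin.castSucc with hs
  have hcard : Module.finrank ℝ (Eu (m+1)) = Fintype.card (Fin (m+1)) := by simp
  have hu' := orthonormal_iff_ite.mp hu
  have hres : Orthonormal ℝ (s.restrict v) := by
    rw [orthonormal_iff_ite]
    rintro ⟨_, i, rfl⟩ ⟨_, j, rfl⟩
    have h1 : s.restrict v ⟨Fin.castSucc i, ⟨i, rfl⟩⟩ = u i := by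
      simp [Set.restrict, hv, Fin.snoc_castSucc]
    have h2 : s.restrict v ⟨Fin.castSucc j, ⟨j, rfl⟩⟩ = u j := by
      simp [Set.restrict, hv, Fin.snoc_castSucc]
    rw [h1, h2, hu' i j]
    by_cases h : i = j
    · simp [h]
    · rw [if_neg h, if_neg (by intro hc; exact h (Fin.castSucc_injective _ (congrArg Subtype.val hc)))]
  obtain ⟨b, hb⟩ := hres.exists_orthonormalBasis_extension_of_card_eq hcard
  exact ⟨b, fun i => by rw [hb _ ⟨i, rfl⟩]; simp [hv]⟩

lemma contDiffAt_gradient {n : ℕ} (ψ : Eu n → ℝ) (x : Eu n) (hψ : ContDiffAt ℝ 2 ψ x) :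
    ContDiffAt ℝ 1 (gradient ψ) x := by
  have h1 : ContDiffAt ℝ 1 (fderiv ℝ ψ) x := hψ.fderiv_right (by norm_num)
  have h2 : ContDiff ℝ 1 ((InnerProductSpace.toDual ℝ (Eu n)).symm) :=
    LinearIsometryEquiv.contDiff _
  exact h2.comp_contDiffAt x h1

lemma fderiv_eq_inner_gradient {n : ℕ} (ψ : Eu n → ℝ) (y : Eu n) (v : Eu n) :
    fderiv ℝ ψ y v = ⟪gradient ψ y, v⟫ := by
  have h0 : gradient ψ y = (InnerProductSpace.toDual ℝ (Eu n)).symm (fderiv ℝ ψ y) := rfl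
  have h1 : (InnerProductSpace.toDual ℝ (Eu n)) (gradient ψ y) = fderiv ℝ ψ y := by
    rw [h0, LinearIsometryEquiv.apply_symm_apply]
  rw [← h1, InnerProductSpace.toDual_apply_apply]

lemma meanCurv_eq {n : ℕ} (ψ : Eu n → ℝ) (x : Eu n) (hψ : ContDiffAt ℝ 2 ψ x) :
    meanCurvGraph ψ x =
      (Real.sqrt (1 + ‖gradient ψ x‖^2))⁻¹ *
        (∑ i, (fderiv ℝ (gradient ψ) x (EuclideanSpace.single i 1)) i)
      - ((Real.sqrt (1 + ‖gradient ψ x‖^2))^3)⁻¹ *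
        ⟪fderiv ℝ (gradient ψ) x (gradient ψ x), gradient ψ x⟫ := by
  classical
  set G := gradient ψ with hGdef
  set g := G x with hgdef
  set H := fderiv ℝ G x with hHdef
  have hG1 : ContDiffAt ℝ 1 G x := contDiffAt_gradient ψ x hψ
  have hHFD : HasFDerivAt G H x := (hG1.differentiableAt one_ne_zero).hasFDerivAt
  set q₀ : ℝ := 1 + ‖g‖^2 with hq0def
  have hq0pos : 0 < q₀ := by positivity
  set s : ℝ := Real.sqrt q₀ with hsdef
  have hspos : 0 < s := Real.sqrt_pos.mpr hq0pos
  have hinner : HasFDerivAt (fun y => ⟪G y, G y⟫)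
      ((fderivInnerCLM ℝ (G x, G x)).comp (H.prod H)) x := hHFD.inner ℝ hHFD
  have hq : HasFDerivAt (fun y => 1 + ‖G y‖^2)
      ((fderivInnerCLM ℝ (g, g)).comp (H.prod H)) x := by
    have : (fun y => 1 + ‖G y‖^2) = fun y => 1 + ⟪G y, G y⟫ := by
      funext y; rw [real_inner_self_eq_norm_sq]
    rw [this]
    exact (hinner.const_add 1)
  set q' : Eu n →L[ℝ] ℝ := (fderivInnerCLM ℝ (g, g)).comp (H.prod H) with hq'def
  have hq'app : ∀ w, q' w = 2 * ⟪H w, g⟫ := by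
    intro w
    simp only [hq'def, ContinuousLinearMap.comp_apply, ContinuousLinearMap.prod_apply,
      fderivInnerCLM_apply]
    rw [real_inner_comm g (H w)]
    ring
  have hsqrtne : Real.sqrt q₀ ≠ 0 := ne_of_gt hspos
  have hsqrt : HasDerivAt (fun t : ℝ => (Real.sqrt t)⁻¹)
      (-(1 / (2 * Real.sqrt q₀)) / (Real.sqrt q₀)^2) q₀ :=
    (Real.hasDerivAt_sqrt (ne_of_gt hq0pos)).inv hsqrtne
  set c₀ : ℝ := -(1 / (2 * s)) / s^2 with hc0def
  have hv : HasFDerivAt (fun y => (Real.sqrt (1 + ‖G y‖^2))⁻¹) (c₀ • q') x := by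
    have := hsqrt.comp_hasFDerivAt x hq
    exact this
  have hW : HasFDerivAt (fun y => (Real.sqrt (1 + ‖G y‖^2))⁻¹ • G y)
      ((Real.sqrt (1 + ‖g‖^2))⁻¹ • H + (c₀ • q').smulRight g) x := hv.smul hHFD
  have hfd := hW.fderiv
  have : meanCurvGraph ψ x = ∑ i,
      (((Real.sqrt (1 + ‖g‖^2))⁻¹ • H + (c₀ • q').smulRight g)
        (EuclideanSpace.single i 1)) i := by
    rw [meanCurvGraph, divg, ← hfd, trace_eq_sum]
  rw [this]
  have heval : ∀ i : Fin n,
      (((Real.sqrt (1 + ‖g‖^2))⁻¹ • H + (c₀ • q').smulRight g)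
        (EuclideanSpace.single i 1)) i
      = s⁻¹ * (H (EuclideanSpace.single i 1)) i
        + c₀ * (2 * ⟪H (EuclideanSpace.single i 1), g⟫) * g i := by
    intro i
    rw [ContinuousLinearMap.add_apply, ContinuousLinearMap.smulRight_apply,
      ContinuousLinearMap.smul_apply]
    have : ((c₀ • q') (EuclideanSpace.single i 1)) = c₀ * (2 * ⟪H (EuclideanSpace.single i 1), g⟫) := by
      rw [ContinuousLinearMap.smul_apply, hq'app, smul_eq_mul]
    rw [this]
    rw [PiLp.add_apply, PiLp.smul_apply, PiLp.smul_apply]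
    rw [hsdef, hq0def]
    simp only [smul_eq_mul]
    try ring
  rw [Finset.sum_congr rfl fun i _ => heval i]
  rw [Finset.sum_add_distrib, ← Finset.mul_sum]
  have hQ : ∑ i, c₀ * (2 * ⟪H (EuclideanSpace.single i 1), g⟫) * g i
      = (2 * c₀) * ⟪H g, g⟫ := by
    have hg : ⟪H g, g⟫ = ∑ i, g i * ⟪H (EuclideanSpace.single i 1), g⟫ := by
      calc ⟪H g, g⟫ = ⟪H (∑ i, g i • EuclideanSpace.single i (1:ℝ)), g⟫ := by
            rw [eu_sum_single]
        _ = ∑ i, g i * ⟪H (EuclideanSpace.single i 1), g⟫ := by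
            rw [map_sum, sum_inner]
            exact Finset.sum_congr rfl fun i _ => by
              rw [_root_.map_smul, real_inner_smul_left]
    rw [hg, Finset.mul_sum]
    refine Finset.sum_congr rfl fun i _ => by ring
  rw [hQ]
  have hc0 : 2 * c₀ = -(s^3)⁻¹ := by
    rw [hc0def]
    field_simp
  rw [hc0]
  have hs2 : s^2 = q₀ := Real.sq_sqrt (le_of_lt hq0pos)
  rw [hsdef, hq0def, hgdef, hGdef]
  ring

/-- The map `γ ↦ (w ↦ ⟪γ, tail' w⟫)` as a continuous linear map. -/
def XiCLM (n : ℕ) : Eu n →L[ℝ] (Eu (n+1) →L[ℝ] ℝ) :=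
  LinearMap.toContinuousLinearMap
    { toFun := fun γ => (innerSL ℝ γ).comp (tailCLM n)
      map_add' := fun γ₁ γ₂ => by
        ext w
        simp [inner_add_left]
      map_smul' := fun c γ => by
        ext w
        simp [inner_smul_left] }

@[simp] lemma XiCLM_apply {n : ℕ} (γ : Eu n) (w : Eu (n+1)) :
    XiCLM n γ w = ⟪γ, tail' w⟫ := rfl

end Aux


lemma arith_bd1 (Cn a e d : ℝ) (hCn0 : 0 ≤ Cn) (ha0 : 0 ≤ a) (han : a ≤ 1)
    (he0 : 0 ≤ e) (hed : e ≤ d) (hd2 : d ≤ 2) :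
    Cn * a * e + Cn * e * a + Cn * e * e ≤ 4 * Cn * d := by
  nlinarith [mul_nonneg hCn0 he0, mul_nonneg hCn0 ha0, mul_nonneg hCn0 (le_trans he0 hed)]

lemma arith_sc (s c d : ℝ) (hspos : 0 < s) (habs : |c| ≤ s)
    (hsd2 : s^2*d^2 = 2*s^2 - 2*s*|c|) : s^2*d^2/2 ≤ s^2 - c^2 := by
  nlinarith [sq_abs c, abs_nonneg c, mul_nonneg (abs_nonneg c) (sub_nonneg.mpr habs)]

lemma arith_final (h s δ K Cn T Q c d Hww : ℝ) (hδpos : 0 < δ) (hspos : 0 < s)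
    (hKpos : 0 < K) (hCn0 : 0 ≤ Cn) (hd0 : 0 ≤ d)
    (hKs : K * s^2 * δ = 8*Cn^2 + s^2*δ)
    (hT' : -T = δ + h*s - (s^2)⁻¹*Q)
    (hHw' : (s^2)⁻¹*Q - 4*Cn*d ≤ Hww)
    (hs2c2 : s^2*d^2/2 ≤ s^2 - c^2) :
    h*s + δ/2 ≤ (-T + 2*K*s^2) - (-Hww + 2*K*c^2) := by
  have hstep1 : K*s^2*d^2 ≤ 2*K*(s^2 - c^2) := by
    have h1 := mul_le_mul_of_nonneg_left hs2c2 (le_of_lt hKpos)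
    nlinarith [h1]
  have hstep2 : 0 ≤ K*s^2*d^2 - 4*Cn*d + δ/2 := by
    nlinarith [sq_nonneg (2*(K*s^2)*d - 4*Cn), hKs, hδpos,
      mul_pos (mul_pos hKpos (pow_pos hspos 2)) hδpos,
      mul_pos hKpos (pow_pos hspos 2)]
  nlinarith [hstep1, hstep2, hHw', hT']

/-- Suppose `0 ≤ h < a`, `Γ` is an `(n,h)` subset of an open set
`Ω ⊆ ℝ^(n+1)`, `ψ : ℝⁿ → ℝ` is continuous and `C²` on the annulus
`{x : r/16 < |x-x₀| < r}`, such that (i) the trace of the second fundamental form of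
`Σ(ψ)` against the upward unit normal is `< -h√(1+|∇ψ|²)` over the annulus, (ii) `ψ + t`
touches `Γ̄` from above for some `0 < t ≤ M`, and (iii) `Σ(ψ+t) ∩ Γ ⊆ 𝒞_r(x₀)`. Then
`Σ(ψ+t) ∩ Γ` contains no point lying over the open annulus: all touching points lie over
the closed ball `B^n(x₀, r/16)`. -/
theorem stmt19 (n : ℕ) (hn : 1 ≤ n) (h a : ℝ) (hh : 0 ≤ h) (hha : h < a)
    (Ω Γ : Set (Eu (n+1))) (hΩ : IsOpen Ω) (hΓ : IsMH n h Ω Γ)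
    (r : ℝ) (hr : 0 < r) (x₀ : Eu n) (ψ : Eu n → ℝ) (hψc : Continuous ψ)
    (hψ2 : ContDiffOn ℝ 2 ψ {x | r/16 < ‖x - x₀‖ ∧ ‖x - x₀‖ < r})
    (hbarrier : ∀ x, r/16 < ‖x - x₀‖ → ‖x - x₀‖ < r →
      meanCurvGraph ψ x < -h * Real.sqrt (1 + ‖gradient ψ x‖^2))
    (M t : ℝ) (ht0 : 0 < t) (htM : t ≤ M)
    (htouch : TouchesFromAbove (fun x => ψ x + t) (closure Γ))
    (hloc : graphOf (fun x => ψ x + t) ∩ Γ ⊆ {z | ‖tail' z - x₀‖ < r}) :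
    graphOf (fun x => ψ x + t) ∩ Γ ∩
      ({z | ‖tail' z - x₀‖ < r} \ {z | ‖tail' z - x₀‖ ≤ r/16}) = ∅ := by
  classical
  rw [Set.eq_empty_iff_forall_notMem]
  rintro z ⟨⟨hzg, hzΓ⟩, hzr, hznle⟩
  -- the point over which the touching happens
  set x : Eu n := tail' z with hxdef
  have hx1 : r/16 < ‖x - x₀‖ := not_le.mp hznle
  have hx2 : ‖x - x₀‖ < r := hzr
  have hzgr : lastc z = ψ x + t := hzg
  -- the annulus is open
  have hcont : Continuous fun y : Eu n => ‖y - x₀‖ :=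
    (continuous_id.sub continuous_const).norm
  have hopen : IsOpen {y : Eu n | r/16 < ‖y - x₀‖ ∧ ‖y - x₀‖ < r} :=
    (isOpen_lt continuous_const hcont).inter (isOpen_lt hcont continuous_const)
  have hψx : ContDiffAt ℝ 2 ψ x := hψ2.contDiffAt (hopen.mem_nhds ⟨hx1, hx2⟩)
  -- basic quantities
  set G : Eu n → Eu n := gradient ψ with hGdef
  set g : Eu n := G x with hgdef
  set Hm : Eu n →L[ℝ] Eu n := fderiv ℝ G x with hHmdef
  set Cn : ℝ := ‖Hm‖ with hCndef
  have hCn0 : 0 ≤ Cn := norm_nonneg _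
  set s : ℝ := Real.sqrt (1 + ‖g‖^2) with hsdef
  have hq0pos : (0:ℝ) < 1 + ‖g‖^2 := by positivity
  have hspos : 0 < s := Real.sqrt_pos.mpr hq0pos
  have hsne : s ≠ 0 := ne_of_gt hspos
  have hs2 : s^2 = 1 + ‖g‖^2 := Real.sq_sqrt (le_of_lt hq0pos)
  have hs1 : 1 ≤ s := by nlinarith [norm_nonneg g]
  have hgs : ‖g‖ ≤ s := by nlinarith [norm_nonneg g]
  set T : ℝ := ∑ i, (Hm (EuclideanSpace.single i 1)) i with hTdef
  set Q : ℝ := ⟪Hm g, g⟫ with hQdef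
  -- the barrier inequality in terms of T and Q
  have hDval : meanCurvGraph ψ x = s⁻¹ * T - (s^3)⁻¹ * Q := meanCurv_eq ψ x hψx
  have hbar : meanCurvGraph ψ x < -h * s := hbarrier x hx1 hx2
  have hexp : s * (s⁻¹ * T - (s^3)⁻¹ * Q) = T - (s^2)⁻¹ * Q := by
    field_simp
  have hR : h * s^2 < -T + (s^2)⁻¹ * Q := by
    have h1 : s * meanCurvGraph ψ x < s * (-h * s) :=
      mul_lt_mul_of_pos_left hbar hspos
    rw [hDval, hexp] at h1
    nlinarith
  set δ : ℝ := (-T + (s^2)⁻¹ * Q) - h * s with hδdef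
  have hδpos : 0 < δ := by
    have hss : s ≤ s^2 := by nlinarith
    have h2 : h * s ≤ h * s^2 := mul_le_mul_of_nonneg_left hss hh
    simp only [hδdef]
    linarith
  set K : ℝ := 8 * Cn^2 / (s^2 * δ) + 1 with hKdef
  have hKpos : 0 < K := by positivity
  have hKs : K * s^2 * δ = 8 * Cn^2 + s^2 * δ := by
    rw [hKdef]
    field_simp
  -- the test function
  set uu : Eu (n+1) → ℝ := fun w => lastc w - ψ (tail' w) - t with huudef
  set f : Eu (n+1) → ℝ := fun w => uu w + K * (uu w)^2 with hfdef
  have htailcont : Continuous (tail' (n := n)) := (tailCLM n).continuous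
  have hlastcont : Continuous (lastc (n := n)) := (lastCLM n).continuous
  have huucont : Continuous uu :=
    (hlastcont.sub (hψc.comp htailcont)).sub continuous_const
  have huz : uu z = 0 := by
    simp only [huudef, hzgr]
    ring
  have hu_nonpos : ∀ w ∈ Γ, uu w ≤ 0 := by
    intro w hw
    by_contra hpos
    push_neg at hpos
    have hsup : w ∈ supergraphOf (fun x => ψ x + t) := by
      show ψ (tail' w) + t < lastc w
      simp only [huudef] at hpos
      linarith
    have : w ∈ supergraphOf (fun x => ψ x + t) ∩ closure Γ := ⟨hsup, subset_closure hw⟩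
    rw [htouch.2] at this
    exact this
  have hfz : f z = 0 := by simp [hfdef, huz]
  have hmax : IsLocalMaxOn f Γ z := by
    have hlt : -(1/K) < uu z := by
      rw [huz]
      have : 0 < 1/K := by positivity
      linarith
    have hev : ∀ᶠ w in 𝓝 z, -(1/K) < uu w := by
      have hmem : uu ⁻¹' (Set.Ioi (-(1/K))) ∈ 𝓝 z :=
        huucont.continuousAt.preimage_mem_nhds (Ioi_mem_nhds hlt)
      exact eventually_of_mem hmem fun w hw => hw
    have hev' : ∀ᶠ w in 𝓝[Γ] z, -(1/K) < uu w := hev.filter_mono nhdsWithin_le_nhds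
    have hmemΓ : ∀ᶠ w in 𝓝[Γ] z, w ∈ Γ := eventually_mem_nhdsWithin
    show ∀ᶠ w in 𝓝[Γ] z, f w ≤ f z
    filter_upwards [hev', hmemΓ] with w h1 h2
    rw [hfz]
    have h3 : uu w ≤ 0 := hu_nonpos w h2
    have h4 : K * uu w > -1 := by
      have := mul_lt_mul_of_pos_left h1 hKpos
      rw [mul_neg] at this
      rw [mul_one_div, div_self (ne_of_gt hKpos)] at this
      linarith
    show uu w + K * (uu w)^2 ≤ 0
    nlinarith
  -- derivative computations
  set U : Set (Eu (n+1)) := tail' ⁻¹' {y : Eu n | r/16 < ‖y - x₀‖ ∧ ‖y - x₀‖ < r} with hUdef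
  have hUopen : IsOpen U := hopen.preimage htailcont
  have hzU : z ∈ U := ⟨hx1, hx2⟩
  have hUnhds : U ∈ 𝓝 z := hUopen.mem_nhds hzU
  have htail_fd : ∀ w : Eu (n+1), HasFDerivAt tail' (tailCLM n) w :=
    fun w => (tailCLM n).hasFDerivAt
  have huu_fd : ∀ w ∈ U, HasFDerivAt uu (lastCLM n - XiCLM n (G (tail' w))) w := by
    intro w hw
    have hψw : ContDiffAt ℝ 2 ψ (tail' w) := hψ2.contDiffAt (hopen.mem_nhds hw)
    have hψd : HasFDerivAt ψ (fderiv ℝ ψ (tail' w)) (tail' w) :=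
      (hψw.differentiableAt (by norm_num)).hasFDerivAt
    have hcomp : HasFDerivAt (fun w' => ψ (tail' w'))
        ((fderiv ℝ ψ (tail' w)).comp (tailCLM n)) w := hψd.comp w (htail_fd w)
    have hXi : (fderiv ℝ ψ (tail' w)).comp (tailCLM n) = XiCLM n (G (tail' w)) := by
      ext v
      rw [ContinuousLinearMap.comp_apply, XiCLM_apply, tailCLM_apply]
      exact fderiv_eq_inner_gradient ψ (tail' w) (tail' v)
    have h1 : HasFDerivAt (fun w' => lastc w' - ψ (tail' w') - t)
        ((lastCLM n) - ((fderiv ℝ ψ (tail' w)).comp (tailCLM n))) w :=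
      (((lastCLM n).hasFDerivAt).sub hcomp).sub_const t
    rw [hXi] at h1
    exact h1
  have hf_fd : ∀ w ∈ U, HasFDerivAt f
      ((1 + K * (2 * uu w)) • (lastCLM n - XiCLM n (G (tail' w)))) w := by
    intro w hw
    have h1 : HasDerivAt (fun sx : ℝ => sx^2) (2 * (uu w)) (uu w) := by
      simpa using hasDerivAt_pow 2 (uu w)
    have h2 : HasDerivAt (fun sx : ℝ => sx + K * sx^2) (1 + K * (2 * uu w)) (uu w) :=
      (hasDerivAt_id (uu w)).add (h1.const_mul K)
    exact h2.comp_hasFDerivAt w (huu_fd w hw)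
  set Φ : Eu (n+1) → (Eu (n+1) →L[ℝ] ℝ) :=
    fun w => (1 + K * (2 * uu w)) • (lastCLM n - XiCLM n (G (tail' w))) with hΦdef
  have hev_fderiv : fderiv ℝ f =ᶠ[𝓝 z] Φ :=
    eventually_of_mem hUnhds fun w hw => (hf_fd w hw).fderiv
  set lam : Eu (n+1) →L[ℝ] ℝ := lastCLM n - XiCLM n g with hlamdef
  -- second derivative of f at z
  have hG_fd : HasFDerivAt G Hm x :=
    ((contDiffAt_gradient ψ x hψx).differentiableAt one_ne_zero).hasFDerivAt
  have hGt_fd : HasFDerivAt (fun w => G (tail' w)) (Hm.comp (tailCLM n)) z :=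
    hG_fd.comp (f := tail') z (htail_fd z)
  have hXiG_fd : HasFDerivAt (fun w => XiCLM n (G (tail' w)))
      ((XiCLM n).comp (Hm.comp (tailCLM n))) z := ((XiCLM n).hasFDerivAt).comp z hGt_fd
  have hLam_fd : HasFDerivAt (fun w => lastCLM n - XiCLM n (G (tail' w)))
      (-((XiCLM n).comp (Hm.comp (tailCLM n)))) z := hXiG_fd.const_sub (lastCLM n)
  have hc_fd : HasFDerivAt (fun w => 1 + K * (2 * uu w)) (K • ((2:ℝ) • lam)) z := by
    have h0 : HasFDerivAt uu lam z := huu_fd z hzU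
    exact ((h0.const_mul 2).const_mul K).const_add 1
  have hΦ_fd : HasFDerivAt Φ
      ((1 + K * (2 * uu z)) • (-((XiCLM n).comp (Hm.comp (tailCLM n))))
        + (K • ((2:ℝ) • lam)).smulRight (lastCLM n - XiCLM n (G (tail' z)))) z :=
    hc_fd.smul hLam_fd
  have hBeq : fderiv ℝ (fderiv ℝ f) z
      = (1 + K * (2 * uu z)) • (-((XiCLM n).comp (Hm.comp (tailCLM n))))
        + (K • ((2:ℝ) • lam)).smulRight (lastCLM n - XiCLM n (G (tail' z))) := by
    rw [hev_fderiv.fderiv_eq, hΦ_fd.fderiv]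
  have hBapp : ∀ w₁ w₂ : Eu (n+1), fderiv ℝ (fderiv ℝ f) z w₁ w₂
      = -⟪Hm (tail' w₁), tail' w₂⟫ + 2 * K * (lam w₁) * (lam w₂) := by
    intro w₁ w₂
    rw [hBeq]
    rw [ContinuousLinearMap.add_apply, ContinuousLinearMap.smul_apply,
      ContinuousLinearMap.neg_apply, ContinuousLinearMap.comp_apply,
      ContinuousLinearMap.comp_apply, ContinuousLinearMap.smulRight_apply]
    rw [ContinuousLinearMap.add_apply, ContinuousLinearMap.smul_apply,
      ContinuousLinearMap.neg_apply]
    rw [huz]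
    have hGz : G (tail' z) = g := rfl
    rw [hGz]
    simp only [ContinuousLinearMap.smul_apply, XiCLM_apply, tailCLM_apply, smul_eq_mul]
    ring
  -- gradient of f at z
  have hfderiv_z : fderiv ℝ f z = lam := by
    have h1 : fderiv ℝ f z = Φ z := hev_fderiv.self_of_nhds
    rw [h1]
    show (1 + K * (2 * uu z)) • (lastCLM n - XiCLM n (G (tail' z))) = lam
    have hGz : G (tail' z) = g := rfl
    rw [huz, hGz, hlamdef]
    norm_num
  have hlam_app : ∀ w, lam w = lastc w - ⟪g, tail' w⟫ := by
    intro w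
    rw [hlamdef, ContinuousLinearMap.sub_apply, lastCLM_apply, XiCLM_apply]
  have hlam_nu : ∀ w, lam w = ⟪snoc' (-g) 1, w⟫ := by
    intro w
    rw [hlam_app, inner_snoc, inner_neg_left]
    ring
  have hnu_dual : (InnerProductSpace.toDual ℝ (Eu (n+1))) (snoc' (-g) 1) = lam := by
    apply ContinuousLinearMap.ext
    intro w
    rw [InnerProductSpace.toDual_apply_apply, hlam_nu]
  have hgradf : gradient f z = snoc' (-g) 1 := by
    have h0 : gradient f z = (InnerProductSpace.toDual ℝ (Eu (n+1))).symm (fderiv ℝ f z) := rfl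
    rw [h0, hfderiv_z, ← hnu_dual, LinearIsometryEquiv.symm_apply_apply]
  have hnormnu : ‖snoc' (-g) (1:ℝ)‖ = s := by
    have h1 : ‖snoc' (-g) (1:ℝ)‖^2 = s^2 := by
      rw [norm_snoc_sq, norm_neg, hs2]
      ring
    nlinarith [norm_nonneg (snoc' (-g) (1:ℝ))]
  have hgradne : gradient f z ≠ 0 := by
    rw [hgradf]
    intro hc
    rw [← hnormnu, hc, norm_zero] at hspos
    exact lt_irrefl 0 hspos
  -- f is C² on U
  have huuC2 : ContDiffOn ℝ 2 uu U := by
    have h1 : ContDiffOn ℝ 2 (fun w : Eu (n+1) => ψ (tail' w)) U :=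
      hψ2.comp ((tailCLM n).contDiff.contDiffOn) (fun w hw => hw)
    have h2 : ContDiffOn ℝ 2 (lastc (n := n)) U := (lastCLM n).contDiff.contDiffOn
    exact (h2.sub h1).sub contDiffOn_const
  have hfC2 : ContDiffOn ℝ 2 f U :=
    huuC2.add (contDiffOn_const.mul (huuC2.pow 2))
  -- apply the (n,h) property
  have hkey := hΓ.2.2 z hzΓ f ⟨U, hUnhds, hfC2⟩ hmax hgradne
  rw [hgradf, hnormnu] at hkey
  -- lower bound for the trace of the lowest n eigenvalues
  set B2 : Eu (n+1) →L[ℝ] (Eu (n+1) →L[ℝ] ℝ) := fderiv ℝ (fderiv ℝ f) z with hB2def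
  have hinner_single : ∀ (v : Eu n) (i : Fin n), ⟪v, EuclideanSpace.single i (1:ℝ)⟫ = v i := by
    intro v i
    rw [inner_eu]
    simp [EuclideanSpace.single_apply]
  have hdiag : ∑ j : Fin (n+1), B2 (EuclideanSpace.single j 1) (EuclideanSpace.single j 1)
      = -T + 2*K*s^2 := by
    have hterm : ∀ j : Fin (n+1), B2 (EuclideanSpace.single j 1) (EuclideanSpace.single j 1)
        = -⟪Hm (tail' (EuclideanSpace.single j 1)), tail' (EuclideanSpace.single j 1)⟫
          + 2*K*(lastc (EuclideanSpace.single j (1:ℝ))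
            - ⟪g, tail' (EuclideanSpace.single j 1)⟫)^2 := by
      intro j
      rw [hBapp, hlam_app]
      ring
    rw [Finset.sum_congr rfl fun j _ => hterm j, Fin.sum_univ_castSucc]
    have hcs : ∀ i : Fin n,
        -⟪Hm (tail' (EuclideanSpace.single (Fin.castSucc i) (1:ℝ))),
            tail' (EuclideanSpace.single (Fin.castSucc i) 1)⟫
          + 2*K*(lastc (EuclideanSpace.single (Fin.castSucc i) (1:ℝ))
            - ⟪g, tail' (EuclideanSpace.single (Fin.castSucc i) 1)⟫)^2
        = -(Hm (EuclideanSpace.single i 1)) i + 2*K*(g i)^2 := by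
      intro i
      rw [tail_single_castSucc, lastc_single_castSucc, hinner_single, hinner_single]
      ring
    have hlast :
        -⟪Hm (tail' (EuclideanSpace.single (Fin.last n) (1:ℝ))),
            tail' (EuclideanSpace.single (Fin.last n) 1)⟫
          + 2*K*(lastc (EuclideanSpace.single (Fin.last n) (1:ℝ))
            - ⟪g, tail' (EuclideanSpace.single (Fin.last n) 1)⟫)^2
        = 2*K := by
      rw [tail_single_last, lastc_single_last]
      simp
    rw [Finset.sum_congr rfl fun i _ => hcs i, hlast, Finset.sum_add_distrib]
    have h1 : ∑ i, -(Hm (EuclideanSpace.single i 1)) i = -T := by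
      rw [hTdef, ← Finset.sum_neg_distrib]
    have hgsq : ‖g‖^2 = s^2 - 1 := by rw [hs2]; ring
    have h2 : ∑ i : Fin n, 2*K*(g i)^2 = 2*K*(s^2 - 1) := by
      rw [← Finset.mul_sum, ← norm_sq_eu, hgsq]
    rw [h1, h2]
    ring
  have hlow : h*s + δ/2 ≤ traceLowest n B2 := by
    apply le_csInf
    · refine ⟨_, fun i : Fin n => EuclideanSpace.single (Fin.castSucc i) (1:ℝ), ?_, rfl⟩
      have h1 := (EuclideanSpace.basisFun (Fin (n+1)) ℝ).orthonormal.comp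
        Fin.castSucc (Fin.castSucc_injective n)
      have heq : (⇑(EuclideanSpace.basisFun (Fin (n+1)) ℝ) ∘ Fin.castSucc)
          = fun i : Fin n => EuclideanSpace.single (Fin.castSucc i) (1:ℝ) := by
        funext i
        simp [Function.comp, EuclideanSpace.basisFun_apply]
      rwa [heq] at h1
    · rintro b ⟨u, hu, rfl⟩
      obtain ⟨bb, hbb⟩ := extend_orthonormal u hu
      set w : Eu (n+1) := bb (Fin.last n) with hwdef
      have hw1 : ‖w‖ = 1 := bb.orthonormal.1 (Fin.last n)
      have hsum : ∑ i, B2 (u i) (u i) = (-T + 2*K*s^2) - B2 w w := by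
        have h1 : ∑ j : Fin (n+1), B2 (bb j) (bb j) = ∑ i, B2 (u i) (u i) + B2 w w := by
          rw [Fin.sum_univ_castSucc]
          congr 1
          exact Finset.sum_congr rfl fun i _ => by rw [hbb i]
        have h2 := sum_bilin_basis B2 bb
        rw [← hdiag, ← h2, h1]
        ring
      rw [hsum]
      set w' : Eu n := tail' w with hw'def
      set c : ℝ := lam w with hcdef
      have hBww : B2 w w = -⟪Hm w', w'⟫ + 2*K*c^2 := by
        rw [hBapp]
        ring
      set ν : Eu (n+1) := snoc' (-g) 1 with hνdef
      have hcν : ⟪ν, w⟫ = c := (hlam_nu w).symm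
      set ε : ℝ := if 0 ≤ c then (1:ℝ) else -1 with hεdef
      have hε2 : ε^2 = 1 := by rw [hεdef]; split_ifs <;> norm_num
      have hεabs : |ε| = 1 := by rw [hεdef]; split_ifs <;> norm_num
      have hεc : ε * c = |c| := by
        rw [hεdef]
        split_ifs with hc0
        · rw [abs_of_nonneg hc0, one_mul]
        · rw [abs_of_neg (lt_of_not_ge hc0)]; ring
      set w₀ : Eu (n+1) := (ε * s⁻¹) • ν with hw0def
      have hw0norm : ‖w₀‖ = 1 := by
        rw [hw0def, norm_smul, hnormnu]
        rw [Real.norm_eq_abs, abs_mul, hεabs, abs_inv, abs_of_pos hspos]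
        field_simp
      set d : ℝ := ‖w - w₀‖ with hddef
      have hd0 : 0 ≤ d := norm_nonneg _
      have hd2le : d ≤ 2 := by
        have := norm_sub_le w w₀
        rw [hw1, hw0norm] at this
        rw [hddef]
        linarith
      have hcabs : |c| ≤ s := by
        rw [← hcν]
        have h1 := abs_real_inner_le_norm ν w
        rw [hnormnu, hw1, mul_one] at h1
        exact h1
      have hd2 : d^2 = 2 - 2*(s⁻¹*|c|) := by
        rw [hddef, @norm_sub_sq_real, hw1, hw0norm]
        have hiw : ⟪w, w₀⟫ = ε*s⁻¹*c := by
          rw [real_inner_comm, hw0def, real_inner_smul_left, hcν]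
        rw [hiw]
        have : ε*s⁻¹*c = s⁻¹*|c| := by rw [← hεc]; ring
        rw [this]
        ring
      -- Hessian bilinear estimates
      set a₀ : Eu n := (ε * s⁻¹) • (-g) with ha0def
      have ha0 : tail' w₀ = a₀ := by
        rw [hw0def, hνdef]
        have h1 : tail' ((ε * s⁻¹) • snoc' (-g) 1) = (ε * s⁻¹) • tail' (snoc' (-g) 1) := rfl
        rw [h1, tail_snoc, ha0def]
      set e : Eu n := w' - a₀ with hedef
      have he_le : ‖e‖ ≤ d := by
        have h1 : e = tail' (w - w₀) := by
          rw [hedef, hw'def, ← ha0]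
          rfl
        rw [h1, hddef]
        exact norm_tail_le _
      have ha0n : ‖a₀‖ ≤ 1 := by
        rw [ha0def, norm_smul, norm_neg]
        rw [Real.norm_eq_abs, abs_mul, hεabs, abs_inv, abs_of_pos hspos]
        have h1 : s⁻¹ * ‖g‖ ≤ s⁻¹ * s :=
          mul_le_mul_of_nonneg_left hgs (inv_nonneg.mpr (le_of_lt hspos))
        rw [inv_mul_cancel₀ hsne] at h1
        simpa using h1
      have hbd : ∀ p q : Eu n, |⟪Hm p, q⟫| ≤ Cn * ‖p‖ * ‖q‖ := by
        intro p q
        calc |⟪Hm p, q⟫| ≤ ‖Hm p‖ * ‖q‖ := abs_real_inner_le_norm _ _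
          _ ≤ (Cn * ‖p‖) * ‖q‖ := mul_le_mul_of_nonneg_right (Hm.le_opNorm p) (norm_nonneg q)
          _ = Cn * ‖p‖ * ‖q‖ := by ring
      have hQa0 : ⟪Hm a₀, a₀⟫ = (s^2)⁻¹ * Q := by
        rw [ha0def, _root_.map_smul, real_inner_smul_left, real_inner_smul_right]
        rw [map_neg, inner_neg_neg]
        have h2 : ε * s⁻¹ * (ε * s⁻¹ * ⟪Hm g, g⟫) = ε^2 * ((s^2)⁻¹ * ⟪Hm g, g⟫) := by
          rw [sq ε, sq s, mul_inv]
          ring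
        rw [h2, hε2, one_mul, hQdef]
      have hw'ae : w' = a₀ + e := by
        rw [hedef]
        abel
      have hexp2 : ⟪Hm w', w'⟫
          = ⟪Hm a₀, a₀⟫ + (⟪Hm a₀, e⟫ + ⟪Hm e, a₀⟫ + ⟪Hm e, e⟫) := by
        calc ⟪Hm w', w'⟫ = ⟪Hm (a₀ + e), a₀ + e⟫ := by rw [← hw'ae]
          _ = _ := by
            rw [map_add, inner_add_left, inner_add_right, inner_add_right]
            ring
      have hHw' : (s^2)⁻¹ * Q - 4*Cn*d ≤ ⟪Hm w', w'⟫ := by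
        have h1 := hbd a₀ e
        have h2 := hbd e a₀
        have h3 := hbd e e
        have hn1 := neg_abs_le ⟪Hm a₀, e⟫
        have hn2 := neg_abs_le ⟪Hm e, a₀⟫
        have hn3 := neg_abs_le ⟪Hm e, e⟫
        have hball := arith_bd1 Cn ‖a₀‖ ‖e‖ d hCn0 (norm_nonneg a₀) ha0n
          (norm_nonneg e) he_le hd2le
        rw [hexp2, hQa0]
        linarith
      have hsd2 : s^2*d^2 = 2*s^2 - 2*s*|c| := by
        rw [hd2]
        field_simp
      have hs2c2 : s^2*d^2/2 ≤ s^2 - c^2 := arith_sc s c d hspos hcabs hsd2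
      have hT' : -T = δ + h*s - (s^2)⁻¹*Q := by rw [hδdef]; ring
      rw [hBww]
      exact arith_final h s δ K Cn T Q c d _ hδpos hspos hKpos hCn0 hd0 hKs hT' hHw' hs2c2
  have hcontr : h * s + δ / 2 ≤ h * s := le_trans hlow hkey
  have hhalf : (0:ℝ) < δ / 2 := half_pos hδpos
  exact lt_irrefl (h * s) (lt_of_lt_of_le (lt_add_of_pos_right (h * s) hhalf) hcontr)
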